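/- Let (E,F) be a uniformly self-similar ends space and let H₁, H₂ be half-spaces of (E,F). Then there exists φ ∈ Homeo(E,F) with φ(H₁) = H₂; that is, any two half-spaces are related by an ambient homeomorphism of (E,F). -/

import Mathlib

section EndsSpace

variable {E : Type*} [TopologicalSpace E]

/-- A homeomorphism of pairs from `(A, A ∩ F)` to `(B, B ∩ F)`:
a homeomorphism of the subspaces `A → B` carrying `A ∩ F` onto `B ∩ F`. -/
def PairHomeo (F A B : Set E) : Prop :=
  ∃ h : A ≃ₜ B, ∀ x : A, ((h x : E) ∈ F ↔ (x : E) ∈ F)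

/-- `(E, F)` is self-similar: every partition of `E` into finitely many pairwise
disjoint nonempty clopen sets has a piece containing a clopen set `D` with
`(D, D ∩ F)` homeomorphic (as a pair) to `(E, F)`. -/
def SelfSimilarPair (F : Set E) : Prop :=
  ∀ (n : ℕ) (P : Fin n → Set E),
    (∀ i, IsClopen (P i)) → (∀ i, (P i).Nonempty) →
    Pairwise (Function.onFun Disjoint P) → (⋃ i, P i) = Set.univ →
    ∃ i, ∃ D : Set E, IsClopen D ∧ D ⊆ P i ∧ PairHomeo F D Set.univ

/-- The preorder `x ≼ y` on ends: every clopen neighborhood `U` of `y` contains a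
clopen set `D` for which there are a clopen neighborhood `V` of `x` and a
homeomorphism of pairs `(V, V ∩ F) → (D, D ∩ F)`. -/
def EndsLE (F : Set E) (x y : E) : Prop :=
  ∀ U : Set E, IsClopen U → y ∈ U →
    ∃ D : Set E, D ⊆ U ∧ IsClopen D ∧
      ∃ V : Set E, IsClopen V ∧ x ∈ V ∧ PairHomeo F V D

/-- The equivalence `x ∼ y`: `x ≼ y` and `y ≼ x`. -/
def EndsEquiv (F : Set E) (x y : E) : Prop := EndsLE F x y ∧ EndsLE F y x

/-- `x` is a maximal end. -/
def MaximalEnd (F : Set E) (x : E) : Prop := ∀ y, EndsLE F x y → EndsLE F y x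

/-- `M(E)`, the set of maximal ends. -/
def MaxSet (F : Set E) : Set E := {x | MaximalEnd F x}

/-- `(E, F)` is uniformly self-similar: it is self-similar, `M(E)` is a single
`∼`-equivalence class, and `M(E)` is homeomorphic to the Cantor space `ℕ → Bool`. -/
def UniformlySelfSimilar (F : Set E) : Prop :=
  SelfSimilarPair F ∧
  (∃ x, MaxSet F = {y | EndsEquiv F x y}) ∧
  Nonempty (↥(MaxSet F) ≃ₜ (ℕ → Bool))

/-- The group `Homeo(E,F)` of homeomorphisms of `E` preserving `F`,
as a subgroup of the permutation group of `E`. -/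
def EndsHomeo (F : Set E) : Subgroup (Equiv.Perm E) where
  carrier := {h | Continuous h ∧ Continuous h.symm ∧ ∀ x, h x ∈ F ↔ x ∈ F}
  one_mem' := ⟨continuous_id, continuous_id, fun _ => Iff.rfl⟩
  mul_mem' := by
    rintro a b ⟨ha1, ha2, ha3⟩ ⟨hb1, hb2, hb3⟩
    refine ⟨?_, ?_, fun x => ?_⟩
    · exact ha1.comp hb1
    · exact hb2.comp ha2
    · exact (ha3 (b x)).trans (hb3 x)
  inv_mem' := by
    rintro a ⟨ha1, ha2, ha3⟩
    refine ⟨ha2, ha1, fun x => ?_⟩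
    have h := ha3 (a⁻¹ x)
    rw [← Equiv.Perm.mul_apply, mul_inv_cancel, Equiv.Perm.one_apply] at h
    exact h.symm

/-- A half-space of `(E,F)`: a clopen set meeting `M(E)` in a nonempty proper subset. -/
def IsHalfSpace (F H : Set E) : Prop :=
  IsClopen H ∧ (H ∩ MaxSet F).Nonempty ∧ H ∩ MaxSet F ⊂ MaxSet F

/-- `φ` is an `H`-translation: the sets `φⁿ(H)`, `n ∈ ℤ`, are pairwise disjoint. -/
def IsHTranslation (H : Set E) (φ : Equiv.Perm E) : Prop :=
  ∀ m n : ℤ, m ≠ n → Disjoint ((φ ^ m) '' H) ((φ ^ n) '' H)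

/-- A homeomorphism is supported on `H` if it fixes every point outside `H`. -/
def SupportedOn (H : Set E) (h : Equiv.Perm E) : Prop := ∀ x ∉ H, h x = x

end EndsSpace


section Aux

variable {E : Type*} [TopologicalSpace E] {F : Set E}

/-- Restriction of a clopen pair homeomorphism to a clopen subset. -/
theorem pairHomeo_restrict {V D C : Set E} (hV : IsClopen V) (hD : IsClopen D)
    (hC : IsClopen C) (hCV : C ⊆ V) (h : (V : Set E) ≃ₜ D)
    (hhF : ∀ v : V, ((h v : E) ∈ F ↔ (v : E) ∈ F)) :
    ∃ C' : Set E, IsClopen C' ∧ C' ⊆ D ∧ PairHomeo F C C' ∧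
      ∀ v : V, ((v : E) ∈ C ↔ (h v : E) ∈ C') := by
  classical
  set S : Set V := Subtype.val ⁻¹' C with hS
  set C' : Set E := Subtype.val '' (h '' S) with hC'
  have hsub : C' ⊆ D := by
    rintro _ ⟨d, _, rfl⟩; exact d.2
  have hSclopen : IsClopen S := hC.preimage continuous_subtype_val
  have hhS : IsClopen (h '' S) := by
    rw [← Homeomorph.preimage_symm]
    exact hSclopen.preimage h.symm.continuous
  have hC'clopen : IsClopen C' := by
    constructor
    · exact (hD.isClosed.isClosedEmbedding_subtypeVal.isClosedMap _ hhS.isClosed)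
    · exact (hD.isOpen.isOpenMap_subtype_val _ hhS.isOpen)
  have hmem : ∀ v : V, ((v : E) ∈ C ↔ (h v : E) ∈ C') := by
    intro v
    constructor
    · intro hv; exact ⟨h v, ⟨v, hv, rfl⟩, rfl⟩
    · rintro ⟨d, hd, hdv⟩
      have hd2 : d = h v := Subtype.ext hdv
      subst hd2
      obtain ⟨w, hw, hwv⟩ := hd
      have hw2 : w = v := h.injective hwv
      subst hw2
      exact hw
  have hmem' : ∀ c' : E, (hc' : c' ∈ C') → (h.symm ⟨c', hsub hc'⟩ : E) ∈ C := by
    intro c' hc'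
    have := (hmem (h.symm ⟨c', hsub hc'⟩)).2
    simp only [Homeomorph.apply_symm_apply] at this
    exact this hc'
  let e : (C : Set E) ≃ (C' : Set E) :=
    { toFun := fun c => ⟨(h ⟨c.1, hCV c.2⟩ : E), (hmem ⟨c.1, hCV c.2⟩).1 c.2⟩
      invFun := fun c' => ⟨(h.symm ⟨c'.1, hsub c'.2⟩ : E), hmem' c'.1 c'.2⟩
      left_inv := by
        intro c
        apply Subtype.ext
        show (h.symm ⟨(h ⟨c.1, hCV c.2⟩ : E), _⟩ : E) = c.1
        have heq : (⟨(h ⟨c.1, hCV c.2⟩ : E), hsub ((hmem ⟨c.1, hCV c.2⟩).1 c.2)⟩ : D)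
            = h ⟨c.1, hCV c.2⟩ := Subtype.ext rfl
        rw [heq, Homeomorph.symm_apply_apply]
      right_inv := by
        intro c'
        apply Subtype.ext
        show (h ⟨(h.symm ⟨c'.1, hsub c'.2⟩ : E), _⟩ : E) = c'.1
        have heq : (⟨(h.symm ⟨c'.1, hsub c'.2⟩ : E), hCV (hmem' c'.1 c'.2)⟩ : V)
            = h.symm ⟨c'.1, hsub c'.2⟩ := Subtype.ext rfl
        rw [heq, Homeomorph.apply_symm_apply] }
  have hcont1 : Continuous e := Continuous.subtype_mk
    (continuous_subtype_val.comp (h.continuous.comp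
      (Continuous.subtype_mk continuous_subtype_val _))) _
  have hcont2 : Continuous e.symm := Continuous.subtype_mk
    (continuous_subtype_val.comp (h.symm.continuous.comp
      (Continuous.subtype_mk continuous_subtype_val _))) _
  exact ⟨C', hC'clopen, hsub, ⟨⟨e, hcont1, hcont2⟩, fun c => hhF ⟨c.1, hCV c.2⟩⟩, hmem⟩

end Aux

section Aux2
variable {E : Type*} [TopologicalSpace E] {F : Set E}

theorem pairHomeo_refl (F A : Set E) : PairHomeo F A A :=
  ⟨Homeomorph.refl _, fun _ => Iff.rfl⟩

theorem pairHomeo_symm {A B : Set E} (h : PairHomeo F A B) : PairHomeo F B A := by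
  obtain ⟨e, he⟩ := h
  refine ⟨e.symm, fun x => ?_⟩
  have := (he (e.symm x)).symm
  simpa using this

theorem pairHomeo_trans {A B C : Set E} (h1 : PairHomeo F A B) (h2 : PairHomeo F B C) :
    PairHomeo F A C := by
  obtain ⟨e1, he1⟩ := h1
  obtain ⟨e2, he2⟩ := h2
  exact ⟨e1.trans e2, fun x => (he2 (e1 x)).trans (he1 x)⟩

theorem endsLE_trans {x y z : E} (hxy : EndsLE F x y) (hyz : EndsLE F y z) :
    EndsLE F x z := by
  intro U hU hzU
  obtain ⟨D, hDU, hD, V, hV, hyV, hVD⟩ := hyz U hU hzU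
  obtain ⟨D', hD'V, hD', V', hV', hxV', hV'D'⟩ := hxy V hV hyV
  obtain ⟨e, he⟩ := hVD
  obtain ⟨C', hC', hC'D, hDC', -⟩ := pairHomeo_restrict hV hD hD' hD'V e he
  exact ⟨C', fun a ha => hDU (hC'D ha), hC', V', hV', hxV',
    pairHomeo_trans hV'D' hDC'⟩

/-- A "heavy" point: every clopen neighborhood contains a clopen copy of `(E,F)`. -/
def HeavyPt (F : Set E) (x : E) : Prop :=
  ∀ U : Set E, IsClopen U → x ∈ U → ∃ D : Set E, IsClopen D ∧ D ⊆ U ∧ PairHomeo F D Set.univ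

theorem HeavyPt.le {x : E} (hx : HeavyPt F x) (y : E) : EndsLE F y x := by
  intro U hU hxU
  obtain ⟨D, hD, hDU, hcopy⟩ := hx U hU hxU
  exact ⟨D, hDU, hD, Set.univ, isClopen_univ, Set.mem_univ y, pairHomeo_symm hcopy⟩

theorem HeavyPt.maximalEnd {x : E} (hx : HeavyPt F x) : MaximalEnd F x :=
  fun y _ => hx.le y

theorem heavyPt_exists [Nonempty E] [CompactSpace E] (hss : SelfSimilarPair F) :
    ∃ x : E, HeavyPt F x := by
  classical
  by_contra hno
  push_neg at hno
  have hch : ∀ x : E, ∃ U : Set E, IsClopen U ∧ x ∈ U ∧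
      ¬∃ D : Set E, IsClopen D ∧ D ⊆ U ∧ PairHomeo F D Set.univ := by
    intro x
    by_contra hbad
    push_neg at hbad
    exact hno x (fun U hU hxU => by
      obtain ⟨D, hD, hDU, hcopy⟩ := hbad U hU hxU
      exact ⟨D, hD, hDU, hcopy⟩)
  choose u hu1 hu2 hu3 using hch
  have hcover : (Set.univ : Set E) ⊆ ⋃ x : E, u x :=
    fun y _ => Set.mem_iUnion.2 ⟨y, hu2 y⟩
  obtain ⟨t, ht⟩ := isCompact_univ.elim_finite_subcover u (fun x => (hu1 x).isOpen) hcover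
  set k := t.card with hk
  let q : Fin k → Set E := fun i => u (t.equivFin.symm i).1
  have hqclopen : ∀ i, IsClopen (q i) := fun i => hu1 _
  have hqcover : (⋃ i, q i) = Set.univ := by
    apply Set.eq_univ_of_univ_subset
    intro y hy
    obtain ⟨x, hxt, hyx⟩ := Set.mem_iUnion₂.1 (ht hy)
    exact Set.mem_iUnion.2 ⟨t.equivFin ⟨x, hxt⟩, by simpa [q] using hyx⟩
  let p : Fin k → Set E := fun i => q i \ ⋃ j : Fin k, ⋃ _ : j < i, q j
  have hpclopen : ∀ i, IsClopen (p i) := by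
    intro i
    refine (hqclopen i).diff ?_
    have : (⋃ j : Fin k, ⋃ _ : j < i, q j) = ⋃ j ∈ {j : Fin k | j < i}, q j := by
      simp [Set.mem_setOf_eq]
    rw [this]
    exact Set.Finite.isClopen_biUnion (Set.toFinite _) (fun j _ => hqclopen j)
  have hpsub : ∀ i, p i ⊆ q i := fun i => Set.diff_subset
  have hpdisj : ∀ i j : Fin k, i < j → Disjoint (p i) (p j) := by
    intro i j hlt
    refine Set.disjoint_left.2 fun a hai haj => ?_
    exact haj.2 (Set.mem_iUnion.2 ⟨i, Set.mem_iUnion.2 ⟨hlt, hpsub i hai⟩⟩)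
  have hpdisj' : ∀ i j : Fin k, i ≠ j → Disjoint (p i) (p j) := by
    intro i j hij
    rcases lt_or_gt_of_ne hij with hlt | hlt
    · exact hpdisj i j hlt
    · exact (hpdisj j i hlt).symm
  have hpcover : (⋃ i, p i) = Set.univ := by
    apply Set.eq_univ_of_univ_subset
    intro y _
    have hy : y ∈ ⋃ i, q i := hqcover ▸ Set.mem_univ y
    obtain ⟨i, hi⟩ := Set.mem_iUnion.1 hy
    have hne : (Finset.univ.filter (fun j => y ∈ q j)).Nonempty :=
      ⟨i, by simp [hi]⟩
    obtain ⟨i₀, hi₀mem, hi₀min⟩ :=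
      (Finset.univ.filter (fun j => y ∈ q j)).exists_min_image id hne
    refine Set.mem_iUnion.2 ⟨i₀, (Finset.mem_filter.1 hi₀mem).2, ?_⟩
    intro hmem
    obtain ⟨j, hj⟩ := Set.mem_iUnion.1 hmem
    obtain ⟨hjlt, hyj⟩ := Set.mem_iUnion.1 hj
    have := hi₀min j (Finset.mem_filter.2 ⟨Finset.mem_univ j, hyj⟩)
    exact absurd hjlt (not_lt.2 this)
  let T := {i : Fin k // (p i).Nonempty}
  let m := Fintype.card T
  let g : Fin m → T := (Fintype.equivFin T).symm
  let P : Fin m → Set E := fun j => p (g j).1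
  have hnonempty : ∀ j, (P j).Nonempty := fun j => (g j).2
  have hPdisj : Pairwise (Function.onFun Disjoint P) := by
    intro a b hab
    refine hpdisj' _ _ (fun hval => hab ?_)
    have hg : g a = g b := Subtype.ext hval
    exact (Fintype.equivFin T).symm.injective hg
  have hPcover : (⋃ j, P j) = Set.univ := by
    apply Set.eq_univ_of_univ_subset
    intro y _
    have hy : y ∈ ⋃ i, p i := hpcover ▸ Set.mem_univ y
    obtain ⟨i, hi⟩ := Set.mem_iUnion.1 hy
    refine Set.mem_iUnion.2 ⟨Fintype.equivFin T ⟨i, ⟨y, hi⟩⟩, ?_⟩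
    simpa [P, g] using hi
  obtain ⟨j, D, hD, hDP, hDcopy⟩ := hss m P (fun j => hpclopen _) hnonempty hPdisj hPcover
  exact hu3 _ ⟨D, hD, fun a ha => hpsub _ (hDP ha), hDcopy⟩

theorem maximalEnd_heavy [Nonempty E] [CompactSpace E]
    (huss : UniformlySelfSimilar F) {x : E} (hx : MaximalEnd F x) : HeavyPt F x := by
  obtain ⟨hss, ⟨x₀, hmax⟩, -⟩ := huss
  obtain ⟨z₀, hz₀⟩ := heavyPt_exists hss
  have hz₀max : MaximalEnd F z₀ := hz₀.maximalEnd
  have hz₀mem : EndsEquiv F x₀ z₀ := by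
    have h1 : z₀ ∈ MaxSet F := hz₀max
    rwa [hmax] at h1
  have hxmem : EndsEquiv F x₀ x := by
    have h1 : x ∈ MaxSet F := hx
    rwa [hmax] at h1
  have hz₀x : EndsLE F z₀ x := endsLE_trans hz₀mem.2 hxmem.1
  intro U hU hxU
  obtain ⟨D₁, hD₁U, hD₁, V, hV, hz₀V, hVD₁⟩ := hz₀x U hU hxU
  obtain ⟨D₂, hD₂, hD₂V, hD₂copy⟩ := hz₀ V hV hz₀V
  obtain ⟨e, he⟩ := hVD₁
  obtain ⟨C', hC', hC'D₁, hD₂C', -⟩ := pairHomeo_restrict hV hD₁ hD₂ hD₂V e he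
  exact ⟨C', hC', fun a ha => hD₁U (hC'D₁ ha),
    pairHomeo_trans (pairHomeo_symm hD₂C') hD₂copy⟩

end Aux2

section Aux3
variable {E : Type*} [TopologicalSpace E] {F : Set E}

theorem pairHomeo_symm_prop {D : Set E} (e : (D : Set E) ≃ₜ (Set.univ : Set E))
    (he : ∀ v : D, ((e v : E) ∈ F ↔ (v : E) ∈ F)) :
    ∀ v : (Set.univ : Set E), ((e.symm v : E) ∈ F ↔ (v : E) ∈ F) := by
  intro v
  have := (he (e.symm v)).symm
  simpa using this

theorem maxSet_two_points (huss : UniformlySelfSimilar F) :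
    ∀ p : E, ∃ m, MaximalEnd F m ∧ m ≠ p := by
  intro p
  obtain ⟨-, -, ⟨e⟩⟩ := huss
  have hne : e.symm (fun _ => false) ≠ e.symm (fun _ => true) := by
    intro hcontra
    have := e.symm.injective hcontra
    have h0 := congrFun this 0
    simp at h0
  by_cases h1 : (e.symm (fun _ => false) : E) = p
  · refine ⟨(e.symm (fun _ => true) : E), (e.symm (fun _ => true)).2, ?_⟩
    intro h2
    exact hne (Subtype.ext (h1.trans h2.symm))
  · exact ⟨(e.symm (fun _ => false) : E), (e.symm (fun _ => false)).2, h1⟩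

theorem copy_avoiding [Nonempty E] [CompactSpace E] [T2Space E] [TotallyDisconnectedSpace E]
    (huss : UniformlySelfSimilar F) {x : E} (hx : MaximalEnd F x)
    {W : Set E} (hW : IsClopen W) (hxW : x ∈ W) :
    ∃ D : Set E, IsClopen D ∧ D ⊆ W ∧ x ∉ D ∧ PairHomeo F D Set.univ := by
  obtain ⟨D, hD, hDW, hcopy⟩ := maximalEnd_heavy huss hx W hW hxW
  by_cases hxD : x ∈ D
  · obtain ⟨e, he⟩ := hcopy
    set p : E := (e ⟨x, hxD⟩ : E) with hp
    obtain ⟨m, hm, hmp⟩ := maxSet_two_points huss p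
    have hpc : ({p}ᶜ : Set E) ∈ nhds m :=
      (isOpen_compl_singleton).mem_nhds (by simpa using hmp)
    obtain ⟨Q, ⟨hmQ, hQ⟩, hQsub⟩ := (nhds_basis_clopen m).mem_iff.1 hpc
    obtain ⟨D₂, hD₂, hD₂Q, hD₂copy⟩ := maximalEnd_heavy huss hm Q hQ hmQ
    obtain ⟨C', hC', hC'D, hD₂C', hmemiff⟩ :=
      pairHomeo_restrict isClopen_univ hD hD₂ (Set.subset_univ _) e.symm
        (pairHomeo_symm_prop e he)
    refine ⟨C', hC', fun a ha => hDW (hC'D ha), ?_, ?_⟩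
    · intro hxC'
      have hveq : (⟨p, Set.mem_univ p⟩ : (Set.univ : Set E)) = e ⟨x, hxD⟩ :=
        Subtype.ext rfl
      have := (hmemiff ⟨p, Set.mem_univ p⟩).2
      rw [hveq, Homeomorph.symm_apply_apply] at this
      have hpD₂ : p ∈ D₂ := by
        by_contra hpD₂
        have hiff := hmemiff ⟨p, Set.mem_univ p⟩
        rw [hveq, Homeomorph.symm_apply_apply] at hiff
        exact hpD₂ (hiff.2 hxC')
      exact hQsub (hD₂Q hpD₂) rfl
    · exact pairHomeo_trans (pairHomeo_symm hD₂C') hD₂copy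
  · exact ⟨D, hD, hDW, hxD, hcopy⟩

theorem copy_of_clopen_avoiding [Nonempty E] [CompactSpace E] [T2Space E]
    [TotallyDisconnectedSpace E]
    (huss : UniformlySelfSimilar F) {x : E} (hx : MaximalEnd F x)
    {W : Set E} (hW : IsClopen W) (hxW : x ∈ W) {A : Set E} (hA : IsClopen A) :
    ∃ B : Set E, IsClopen B ∧ B ⊆ W ∧ x ∉ B ∧ PairHomeo F A B := by
  obtain ⟨D, hD, hDW, hxD, hcopy⟩ := copy_avoiding huss hx hW hxW
  obtain ⟨e, he⟩ := hcopy
  obtain ⟨B, hB, hBD, hAB, -⟩ :=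
    pairHomeo_restrict isClopen_univ hD hA (Set.subset_univ _) e.symm
      (pairHomeo_symm_prop e he)
  exact ⟨B, hB, fun a ha => hDW (hBD ha), fun hxB => hxD (hBD hxB), hAB⟩

end Aux3

section Aux4
variable {E : Type*} [TopologicalSpace E] {F : Set E}

theorem clopen_pairHomeo_univ [Nonempty E] [CompactSpace E]
    [TopologicalSpace.MetrizableSpace E] [TotallyDisconnectedSpace E]
    (huss : UniformlySelfSimilar F) {U : Set E} (hU : IsClopen U)
    {x : E} (hx : MaximalEnd F x) (hxU : x ∈ U) : PairHomeo F U Set.univ := by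
  classical
  set A : Set E := Uᶜ with hAdef
  have hA : IsClopen A := hU.compl
  -- countable antitone basis of neighborhoods of x
  obtain ⟨s, hs⟩ := Filter.exists_antitone_basis (nhds x)
  have hshrink : ∀ O : Set E, IsOpen O → x ∈ O →
      ∃ Wc : Set E, IsClopen Wc ∧ x ∈ Wc ∧ Wc ⊆ O := by
    intro O hO hxO
    obtain ⟨Wc, ⟨hxWc, hWc⟩, hsub⟩ := (nhds_basis_clopen x).mem_iff.1 (hO.mem_nhds hxO)
    exact ⟨Wc, hWc, hxWc, hsub⟩
  -- the type of candidate clopen neighborhoods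
  let T := {W : Set E // IsClopen W ∧ x ∈ W ∧ W ⊆ U}
  have pick : ∀ W : T, ∃ B : Set E, IsClopen B ∧ B ⊆ W.1 ∧ x ∉ B ∧ PairHomeo F A B :=
    fun W => copy_of_clopen_avoiding huss hx W.2.1 W.2.2.1 hA
  choose Bf hBf1 hBf2 hBf3 hBf4 using pick
  have stepex : ∀ (n : ℕ) (W : T), ∃ W' : T, W'.1 ⊆ W.1 \ Bf W ∧ W'.1 ⊆ s n := by
    intro n W
    have hsn : x ∈ interior (s n) :=
      mem_interior_iff_mem_nhds.2 (hs.toHasBasis.mem_of_mem trivial)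
    have hO : IsOpen ((W.1 \ Bf W) ∩ interior (s n)) :=
      ((W.2.1.diff (hBf1 W)).isOpen).inter isOpen_interior
    have hxO : x ∈ (W.1 \ Bf W) ∩ interior (s n) :=
      ⟨⟨W.2.2.1, hBf3 W⟩, hsn⟩
    obtain ⟨Wc, hWc, hxWc, hWcsub⟩ := hshrink _ hO hxO
    refine ⟨⟨Wc, hWc, hxWc, fun a ha => W.2.2.2 ((hWcsub ha).1.1)⟩,
      fun a ha => (hWcsub ha).1, fun a ha => interior_subset (hWcsub ha).2⟩
  choose stp hstp1 hstp2 using stepex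
  let Wseq : ℕ → T := fun n => Nat.rec ⟨U, hU, hxU, subset_rfl⟩ (fun n Wn => stp n Wn) n
  set W : ℕ → Set E := fun n => (Wseq n).1 with hWdef
  set B : ℕ → Set E := fun n => Bf (Wseq n) with hBdef
  have hW0 : W 0 = U := rfl
  have hWclopen : ∀ n, IsClopen (W n) := fun n => (Wseq n).2.1
  have hxW : ∀ n, x ∈ W n := fun n => (Wseq n).2.2.1
  have hWU : ∀ n, W n ⊆ U := fun n => (Wseq n).2.2.2
  have hBclopen : ∀ n, IsClopen (B n) := fun n => hBf1 _
  have hBsubW : ∀ n, B n ⊆ W n := fun n => hBf2 _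
  have hxB : ∀ n, x ∉ B n := fun n => hBf3 _
  have hBcopy : ∀ n, PairHomeo F A (B n) := fun n => hBf4 _
  have hWsucc : ∀ n, W (n + 1) ⊆ W n \ B n := fun n => hstp1 n (Wseq n)
  have hWs : ∀ n, W (n + 1) ⊆ s n := fun n => hstp2 n (Wseq n)
  have hWmono : ∀ m n, m ≤ n → W n ⊆ W m := by
    intro m n hmn
    induction n with
    | zero => simpa [Nat.le_zero.1 hmn] using subset_rfl
    | succ k ih =>
      rcases Nat.lt_or_ge m (k+1) with hlt | hge
      · exact fun a ha => ih (Nat.lt_succ_iff.1 hlt) ((hWsucc k ha).1)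
      · have : m = k + 1 := le_antisymm hmn hge
        subst this; exact subset_rfl
  have hBW : ∀ k n, k < n → W n ⊆ W k \ B k :=
    fun k n hkn a ha => hWsucc k (hWmono (k+1) n hkn ha)
  have hBdisj : ∀ m n, m < n → Disjoint (B m) (B n) := by
    intro m n hmn
    refine Set.disjoint_left.2 fun a ham han => ?_
    exact (hBW m n hmn (hBsubW n han)).2 ham
  have hBuniq : ∀ (y : E) (m n : ℕ), y ∈ B m → y ∈ B n → m = n := by
    intro y m n hym hyn
    rcases Nat.lt_trichotomy m n with h | h | h
    · exact absurd hyn (Set.disjoint_left.1 (hBdisj m n h) hym)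
    · exact h
    · exact absurd hym (Set.disjoint_left.1 (hBdisj n m h) hyn)
  have hBnotA : ∀ n (y : E), y ∈ B n → y ∉ A :=
    fun n y hy hA' => hA' (hWU n (hBsubW n hy))
  have hbasis : ∀ O : Set E, IsOpen O → x ∈ O → ∃ n, W n ⊆ O := by
    intro O hO hxO
    obtain ⟨n, -, hn⟩ := hs.toHasBasis.mem_iff.1 (hO.mem_nhds hxO)
    exact ⟨n + 1, fun a ha => hn (hWs n ha)⟩
  have hnotx : ∀ y : E, y ≠ x → ∃ n, y ∉ W n := by
    intro y hy
    obtain ⟨n, hn⟩ := hbasis {y}ᶜ isOpen_compl_singleton (by simpa using (Ne.symm hy))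
    exact ⟨n, fun hyn => (hn hyn) rfl⟩
  -- the homeomorphisms onto the copies
  choose ev hev using hBcopy
  -- the shift map
  set φ : E → E := fun y =>
    if hy : y ∈ A then (ev 0 ⟨y, hy⟩ : E)
    else if hy2 : ∃ n, y ∈ B n then
      (ev (hy2.choose + 1) ((ev hy2.choose).symm ⟨y, hy2.choose_spec⟩) : E)
    else y
    with hφdef
  have hφA : ∀ (y : E) (hy : y ∈ A), φ y = (ev 0 ⟨y, hy⟩ : E) := by
    intro y hy
    simp only [hφdef, dif_pos hy]
  have hφB : ∀ (n : ℕ) (y : E) (hy : y ∈ B n),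
      φ y = (ev (n + 1) ((ev n).symm ⟨y, hy⟩) : E) := by
    intro n y hy
    have hyA : y ∉ A := hBnotA n y hy
    have hy2 : ∃ m, y ∈ B m := ⟨n, hy⟩
    simp only [hφdef, dif_neg hyA, dif_pos hy2]
    have hc : hy2.choose = n := hBuniq y _ n hy2.choose_spec hy
    subst hc
    rfl
  have hφelse : ∀ y : E, y ∉ A → (∀ n, y ∉ B n) → φ y = y := by
    intro y hyA hyB
    simp only [hφdef, dif_neg hyA, dif_neg (fun h : ∃ n, y ∈ B n => hyB h.choose h.choose_spec)]
  -- ranges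
  have hφAin : ∀ (y : E) (hy : y ∈ A), φ y ∈ B 0 := by
    intro y hy; rw [hφA y hy]; exact (ev 0 ⟨y, hy⟩).2
  have hφBin : ∀ (n : ℕ) (y : E) (hy : y ∈ B n), φ y ∈ B (n + 1) := by
    intro n y hy; rw [hφB n y hy]; exact (ev (n+1) _).2
  have hφU : ∀ y : E, φ y ∈ U := by
    intro y
    by_cases hy : y ∈ A
    · exact hWU 0 (hBsubW 0 (hφAin y hy))
    · by_cases hy2 : ∃ n, y ∈ B n
      · obtain ⟨n, hn⟩ := hy2
        exact hWU (n+1) (hBsubW (n+1) (hφBin n y hn))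
      · push_neg at hy2
        rw [hφelse y hy hy2]
        simpa [hAdef] using hy
  -- F preservation
  have hφF : ∀ y : E, φ y ∈ F ↔ y ∈ F := by
    intro y
    by_cases hy : y ∈ A
    · rw [hφA y hy]; exact hev 0 ⟨y, hy⟩
    · by_cases hy2 : ∃ n, y ∈ B n
      · obtain ⟨n, hn⟩ := hy2
        rw [hφB n y hn]
        refine (hev (n+1) _).trans ?_
        have h2 := (hev n ((ev n).symm ⟨y, hn⟩)).symm
        simpa using h2
      · push_neg at hy2
        rw [hφelse y hy hy2]
  -- injectivity
  have hφinj : Function.Injective φ := by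
    intro y₁ y₂ heq
    have key : ∀ y : E, (y ∈ A ∧ φ y ∈ B 0) ∨ (∃ n, y ∈ B n ∧ φ y ∈ B (n+1)) ∨
        ((y ∉ A) ∧ (∀ n, y ∉ B n) ∧ φ y = y) := by
      intro y
      by_cases hy : y ∈ A
      · exact Or.inl ⟨hy, hφAin y hy⟩
      · by_cases hy2 : ∃ n, y ∈ B n
        · obtain ⟨n, hn⟩ := hy2
          exact Or.inr (Or.inl ⟨n, hn, hφBin n y hn⟩)
        · push_neg at hy2
          exact Or.inr (Or.inr ⟨hy, hy2, hφelse y hy hy2⟩)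
    rcases key y₁ with ⟨h1, r1⟩ | ⟨n1, h1, r1⟩ | ⟨h1a, h1b, r1⟩ <;>
      rcases key y₂ with ⟨h2, r2⟩ | ⟨n2, h2, r2⟩ | ⟨h2a, h2b, r2⟩
    · -- A, A
      rw [hφA y₁ h1, hφA y₂ h2] at heq
      have := (ev 0).injective (Subtype.ext heq)
      exact congrArg Subtype.val this
    · exfalso
      have h0 : φ y₂ ∈ B 0 := by rw [← heq]; exact r1
      have := hBuniq (φ y₂) 0 (n2+1) h0 r2
      omega
    · exfalso
      exact h2b 0 (by rw [← r2, ← heq]; exact r1)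
    · exfalso
      have h0 : φ y₁ ∈ B 0 := by rw [heq]; exact r2
      have := hBuniq (φ y₁) (n1+1) 0 r1 h0
      omega
    · -- B n1, B n2
      have h12 : φ y₁ ∈ B (n2+1) := by rw [heq]; exact r2
      have hn : n1 = n2 := by have := hBuniq (φ y₁) (n1+1) (n2+1) r1 h12; omega
      subst hn
      rw [hφB n1 y₁ h1, hφB n1 y₂ h2] at heq
      have e1 := (ev (n1+1)).injective (Subtype.ext heq)
      have e2 := (ev n1).symm.injective e1
      have e3 : (⟨y₁, h1⟩ : (B n1 : Set E)) = ⟨y₂, h2⟩ := e2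
      exact congrArg Subtype.val e3
    · exfalso
      exact h2b (n1+1) (by rw [← r2, ← heq]; exact r1)
    · exfalso
      exact h1b 0 (by rw [← r1, heq]; exact r2)
    · exfalso
      exact h1b (n2+1) (by rw [← r1, heq]; exact r2)
    · rw [r1, r2] at heq; exact heq
  -- surjectivity onto U
  have hφsurj : ∀ z ∈ U, ∃ y : E, φ y = z := by
    intro z hz
    by_cases hz2 : ∃ k, z ∈ B k
    · obtain ⟨k, hk⟩ := hz2
      cases k with
      | zero =>
        refine ⟨((ev 0).symm ⟨z, hk⟩ : E), ?_⟩
        have hmem : ((ev 0).symm ⟨z, hk⟩ : E) ∈ A := ((ev 0).symm ⟨z, hk⟩).2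
        rw [hφA _ hmem]
        have : (⟨((ev 0).symm ⟨z, hk⟩ : E), hmem⟩ : (A : Set E)) = (ev 0).symm ⟨z, hk⟩ :=
          Subtype.ext rfl
        rw [this, Homeomorph.apply_symm_apply]
      | succ n =>
        refine ⟨(ev n ((ev (n+1)).symm ⟨z, hk⟩) : E), ?_⟩
        have hmem : (ev n ((ev (n+1)).symm ⟨z, hk⟩) : E) ∈ B n :=
          (ev n ((ev (n+1)).symm ⟨z, hk⟩)).2
        rw [hφB n _ hmem]
        have : (⟨(ev n ((ev (n+1)).symm ⟨z, hk⟩) : E), hmem⟩ : (B n : Set E))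
            = ev n ((ev (n+1)).symm ⟨z, hk⟩) := Subtype.ext rfl
        rw [this, Homeomorph.symm_apply_apply, Homeomorph.apply_symm_apply]
    · push_neg at hz2
      have hzA : z ∉ A := fun h => h hz
      exact ⟨z, hφelse z hzA hz2⟩
  -- continuity
  have hφcont : Continuous φ := by
    rw [continuous_iff_continuousAt]
    intro y
    by_cases hy : y ∈ A
    · have hcA : ContinuousOn φ A := by
        rw [continuousOn_iff_continuous_restrict]
        have : A.domRestrict φ = fun a : (A : Set E) => (ev 0 a : E) := by
          funext a
          exact hφA a.1 a.2
        rw [this]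
        exact continuous_subtype_val.comp (ev 0).continuous
      exact hcA.continuousAt (hA.isOpen.mem_nhds hy)
    · by_cases hy2 : ∃ n, y ∈ B n
      · obtain ⟨n, hn⟩ := hy2
        have hcB : ContinuousOn φ (B n) := by
          rw [continuousOn_iff_continuous_restrict]
          have : (B n).domRestrict φ = fun b : (B n : Set E) => (ev (n+1) ((ev n).symm b) : E) := by
            funext b
            exact hφB n b.1 b.2
          rw [this]
          exact continuous_subtype_val.comp ((ev (n+1)).continuous.comp
            ((ev n).symm.continuous))
        exact hcB.continuousAt ((hBclopen n).isOpen.mem_nhds hn)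
      · push_neg at hy2
        by_cases hyx : y = x
        · subst hyx
          have hφy : φ y = y := hφelse y hy hy2
          rw [ContinuousAt, hφy]
          intro O hO
          rw [Filter.mem_map]
          obtain ⟨O', hO'sub, hO'open, hyO'⟩ := mem_nhds_iff.1 hO
          obtain ⟨n, hn⟩ := hbasis O' hO'open hyO'
          refine Filter.mem_of_superset ((hWclopen n).isOpen.mem_nhds (hxW n)) ?_
          intro z hz
          have hφz : φ z ∈ W n := by
            by_cases hzA : z ∈ A
            · exact absurd (hWU n hz) hzA
            · by_cases hz2 : ∃ k, z ∈ B k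
              · obtain ⟨k, hk⟩ := hz2
                have hkn : ¬ k < n := by
                  intro hkn
                  exact (hBW k n hkn hz).2 hk
                have : B (k+1) ⊆ W n := fun a ha =>
                  hWmono n (k+1) (by omega) (hBsubW (k+1) ha)
                exact this (hφBin k z hk)
              · push_neg at hz2
                rw [hφelse z hzA hz2]; exact hz
          exact hO'sub (hn hφz)
        · obtain ⟨n, hnW⟩ := hnotx y hyx
          have hyU : y ∈ U := by simpa [hAdef] using hy
          have hyW0 : y ∈ W 0 := hW0 ▸ hyU
          have hex : ∃ k, y ∉ W k := ⟨n, hnW⟩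
          set k₀ := Nat.find hex with hk₀
          have hspec : y ∉ W k₀ := by rw [hk₀]; exact Nat.find_spec hex
          have hk₀pos : k₀ ≠ 0 := by
            intro h0
            rw [h0] at hspec
            exact hspec hyW0
          obtain ⟨j, hj⟩ : ∃ j, k₀ = j + 1 := ⟨k₀ - 1, by omega⟩
          have hyWj : y ∈ W j := by
            by_contra hc
            have hle : k₀ ≤ j := by rw [hk₀]; exact Nat.find_le hc
            omega
          have hyWj1 : y ∉ W (j+1) := by rw [← hj]; exact hspec
          set O : Set E := W j \ (W (j+1) ∪ B j) with hOdef
          have hOopen : IsOpen O :=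
            (hWclopen j).isOpen.sdiff ((hWclopen (j+1)).union (hBclopen j)).isClosed
          have hyO : y ∈ O := ⟨hyWj, fun h => h.elim hyWj1 (hy2 j)⟩
          have hid : ∀ z ∈ O, φ z = z := by
            intro z hzO
            have hzA : z ∉ A := fun h => h (hWU j hzO.1)
            have hzB : ∀ k, z ∉ B k := by
              intro k hzk
              rcases Nat.lt_trichotomy k j with h | h | h
              · exact (hBW k j h hzO.1).2 hzk
              · exact hzO.2 (Or.inr (h ▸ hzk))
              · exact hzO.2 (Or.inl (hWmono (j+1) k h (hBsubW k hzk)))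
            exact hφelse z hzA hzB
          have : φ =ᶠ[nhds y] id :=
            Filter.eventually_of_mem (hOopen.mem_nhds hyO) (fun z hz => hid z hz)
          exact (continuousAt_id.congr this.symm)
  -- assemble the homeomorphism
  have hmapsto : ∀ y : E, φ y ∈ U := hφU
  let q : E ≃ (U : Set E) := Equiv.ofBijective (fun y => ⟨φ y, hφU y⟩)
    ⟨fun a b hab => hφinj (congrArg Subtype.val hab),
     fun z => by
      obtain ⟨y, hy⟩ := hφsurj z.1 z.2
      exact ⟨y, Subtype.ext hy⟩⟩
  have hqcont : Continuous q := Continuous.subtype_mk hφcont _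
  let hhom : E ≃ₜ (U : Set E) := hqcont.homeoOfEquivCompactToT2
  refine ⟨hhom.symm.trans (Homeomorph.Set.univ E).symm, ?_⟩
  intro u
  have hval : ((hhom.symm.trans (Homeomorph.Set.univ E).symm) u : E) = (hhom.symm u : E) := rfl
  rw [hval]
  have huval : (u : E) = φ (hhom.symm u) := by
    have h1 : hhom (hhom.symm u) = u := hhom.apply_symm_apply u
    have h2 : (hhom (hhom.symm u) : E) = φ (hhom.symm u) := rfl
    conv_lhs => rw [← h1]
    exact h2
  rw [huval]
  exact (hφF _).symm

end Aux4

variable {E : Type*} [TopologicalSpace E] [Nonempty E] [CompactSpace E]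
  [TopologicalSpace.MetrizableSpace E] [TotallyDisconnectedSpace E]

theorem halfspaces_ambiently_homeomorphic
    (F : Set E) (hF : IsClosed F) (huss : UniformlySelfSimilar F)
    (H₁ H₂ : Set E) (h1 : IsHalfSpace F H₁) (h2 : IsHalfSpace F H₂) :
    ∃ φ ∈ EndsHomeo F, (φ : Equiv.Perm E) '' H₁ = H₂ := by
  classical
  obtain ⟨hH1, hne1, hpr1⟩ := h1
  obtain ⟨hH2, hne2, hpr2⟩ := h2
  obtain ⟨x1, hx1H, hx1M⟩ := hne1
  obtain ⟨x2, hx2H, hx2M⟩ := hne2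
  obtain ⟨y1, hy1M, hy1not⟩ := Set.exists_of_ssubset hpr1
  obtain ⟨y2, hy2M, hy2not⟩ := Set.exists_of_ssubset hpr2
  have hy1H : y1 ∉ H₁ := fun h => hy1not ⟨h, hy1M⟩
  have hy2H : y2 ∉ H₂ := fun h => hy2not ⟨h, hy2M⟩
  have c1 : PairHomeo F H₁ Set.univ := clopen_pairHomeo_univ huss hH1 hx1M hx1H
  have c2 : PairHomeo F H₂ Set.univ := clopen_pairHomeo_univ huss hH2 hx2M hx2H
  have c1c : PairHomeo F H₁ᶜ Set.univ := clopen_pairHomeo_univ huss hH1.compl hy1M hy1H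
  have c2c : PairHomeo F H₂ᶜ Set.univ := clopen_pairHomeo_univ huss hH2.compl hy2M hy2H
  obtain ⟨ea, hea⟩ := pairHomeo_trans c1 (pairHomeo_symm c2)
  obtain ⟨eb, heb⟩ := pairHomeo_trans c1c (pairHomeo_symm c2c)
  set f : E → E := fun y =>
    if hy : y ∈ H₁ then (ea ⟨y, hy⟩ : E) else (eb ⟨y, hy⟩ : E) with hfdef
  set g : E → E := fun z =>
    if hz : z ∈ H₂ then (ea.symm ⟨z, hz⟩ : E) else (eb.symm ⟨z, hz⟩ : E) with hgdef
  have hf1 : ∀ (y : E) (hy : y ∈ H₁), f y = (ea ⟨y, hy⟩ : E) := by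
    intro y hy; simp only [hfdef, dif_pos hy]
  have hf2 : ∀ (y : E) (hy : y ∉ H₁), f y = (eb ⟨y, hy⟩ : E) := by
    intro y hy; simp only [hfdef, dif_neg hy]
  have hg1 : ∀ (z : E) (hz : z ∈ H₂), g z = (ea.symm ⟨z, hz⟩ : E) := by
    intro z hz; simp only [hgdef, dif_pos hz]
  have hg2 : ∀ (z : E) (hz : z ∉ H₂), g z = (eb.symm ⟨z, hz⟩ : E) := by
    intro z hz; simp only [hgdef, dif_neg hz]
  have hgf : ∀ y : E, g (f y) = y := by
    intro y
    by_cases hy : y ∈ H₁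
    · have hmem : f y ∈ H₂ := by rw [hf1 y hy]; exact (ea ⟨y, hy⟩).2
      rw [hg1 _ hmem]
      have : (⟨f y, hmem⟩ : (H₂ : Set E)) = ea ⟨y, hy⟩ := Subtype.ext (hf1 y hy)
      rw [this, Homeomorph.symm_apply_apply]
    · have hmem : f y ∉ H₂ := by rw [hf2 y hy]; exact (eb ⟨y, hy⟩).2
      rw [hg2 _ hmem]
      have : (⟨f y, hmem⟩ : (H₂ᶜ : Set E)) = eb ⟨y, hy⟩ := Subtype.ext (hf2 y hy)
      rw [this, Homeomorph.symm_apply_apply]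
  have hfg : ∀ z : E, f (g z) = z := by
    intro z
    by_cases hz : z ∈ H₂
    · have hmem : g z ∈ H₁ := by rw [hg1 z hz]; exact (ea.symm ⟨z, hz⟩).2
      rw [hf1 _ hmem]
      have : (⟨g z, hmem⟩ : (H₁ : Set E)) = ea.symm ⟨z, hz⟩ := Subtype.ext (hg1 z hz)
      rw [this, Homeomorph.apply_symm_apply]
    · have hmem : g z ∉ H₁ := by rw [hg2 z hz]; exact (eb.symm ⟨z, hz⟩).2
      rw [hf2 _ hmem]
      have : (⟨g z, hmem⟩ : (H₁ᶜ : Set E)) = eb.symm ⟨z, hz⟩ := Subtype.ext (hg2 z hz)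
      rw [this, Homeomorph.apply_symm_apply]
  set φ : Equiv.Perm E := ⟨f, g, hgf, hfg⟩ with hφdef
  have hfcont : Continuous f := by
    rw [continuous_iff_continuousAt]
    intro y
    by_cases hy : y ∈ H₁
    · have hc : ContinuousOn f H₁ := by
        rw [continuousOn_iff_continuous_restrict]
        have : H₁.domRestrict f = fun a : (H₁ : Set E) => (ea a : E) := by
          funext a; exact hf1 a.1 a.2
        rw [this]
        exact continuous_subtype_val.comp ea.continuous
      exact hc.continuousAt (hH1.isOpen.mem_nhds hy)
    · have hc : ContinuousOn f H₁ᶜ := by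
        rw [continuousOn_iff_continuous_restrict]
        have : H₁ᶜ.domRestrict f = fun a : (H₁ᶜ : Set E) => (eb a : E) := by
          funext a; exact hf2 a.1 a.2
        rw [this]
        exact continuous_subtype_val.comp eb.continuous
      exact hc.continuousAt (hH1.compl.isOpen.mem_nhds hy)
  have hhom : E ≃ₜ E := by
    exact Continuous.homeoOfEquivCompactToT2 (f := φ) hfcont
  have hgcont : Continuous g := by
    have h := (Continuous.homeoOfEquivCompactToT2 (f := φ) hfcont).symm.continuous
    exact h
  refine ⟨φ, ⟨hfcont, hgcont, ?_⟩, ?_⟩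
  · intro y
    show f y ∈ F ↔ y ∈ F
    by_cases hy : y ∈ H₁
    · rw [hf1 y hy]; exact hea ⟨y, hy⟩
    · rw [hf2 y hy]; exact heb ⟨y, hy⟩
  · apply Set.eq_of_subset_of_subset
    · rintro _ ⟨y, hy, rfl⟩
      show f y ∈ H₂
      rw [hf1 y hy]
      exact (ea ⟨y, hy⟩).2
    · intro z hz
      refine ⟨g z, ?_, hfg z⟩
      rw [hg1 z hz]
      exact (ea.symm ⟨z, hz⟩).2
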